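/- The function f₀ of the explicit piecewise linear construction is integrable on [0,∞) with 0 < ∫_0^∞ f₀(y) dy < ∞; consequently f = f₀ / ∫_0^∞ f₀(y) dy (extended by 0 on (−∞,0)) is a probability density supported on [0,∞). -/

import Mathlib

open MeasureTheory Filter Set

noncomputable section

/-- `a_n = 2^(n²)`. -/
def aSeq (n : ℕ) : ℝ := 2 ^ (n ^ 2)

/-- `m_n` : the least positive integer `k` with `k ≥ (√5/√6)·n`. -/
def mIdx (n : ℕ) : ℕ := max 1 ⌈(Real.sqrt 5 / Real.sqrt 6) * (n : ℝ)⌉₊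

/-- `b_n = a_n + a_{m_n}·(ln (n+1))²`. -/
def bSeq (n : ℕ) : ℝ := aSeq n + aSeq (mIdx n) * (Real.log ((n : ℝ) + 1)) ^ 2

/-- `c_n = (a_{n+1} + b_n)/2`. -/
def cSeq (n : ℕ) : ℝ := (aSeq (n + 1) + bSeq n) / 2

/-- `f` is affine (the linear interpolation of its endpoint values) on `[p, q]`. -/
def AffineOnIcc (f : ℝ → ℝ) (p q : ℝ) : Prop :=
  ∀ x ∈ Set.Icc p q, f x = f p + (x - p) / (q - p) * (f q - f p)

/-- The explicit continuous piecewise linear construction `f₀ : [0,∞) → (0,∞)`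
with `f₀(0) = 1`, `f₀(a_n) = 2 a_n⁻³`, `f₀(b_n) = 2 a_n⁻³ / ln(n+1)`,
`f₀(c_n) = 2 a_n⁻³`, affine on `[0,a₁]`, `[a_n,b_n]`, `[b_n,c_n]`, `[c_n,a_{n+1}]`. -/
def PWConstruction (f₀ : ℝ → ℝ) : Prop :=
  ContinuousOn f₀ (Set.Ici 0) ∧
  (∀ x : ℝ, 0 ≤ x → 0 < f₀ x) ∧
  f₀ 0 = 1 ∧
  (∀ n : ℕ, 1 ≤ n →
    f₀ (aSeq n) = 2 / (aSeq n) ^ 3 ∧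
    f₀ (bSeq n) = 2 / (aSeq n) ^ 3 / Real.log ((n : ℝ) + 1) ∧
    f₀ (cSeq n) = 2 / (aSeq n) ^ 3) ∧
  AffineOnIcc f₀ 0 (aSeq 1) ∧
  (∀ n : ℕ, 1 ≤ n →
    AffineOnIcc f₀ (aSeq n) (bSeq n) ∧
    AffineOnIcc f₀ (bSeq n) (cSeq n) ∧
    AffineOnIcc f₀ (cSeq n) (aSeq (n + 1)))

/-- The normalized extension `f = f₀ / ∫₀^∞ f₀(y) dy`, extended by `0` on `(-∞,0)`. -/
def normExt (f₀ : ℝ → ℝ) : ℝ → ℝ :=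
  fun x => if x < 0 then 0 else f₀ x / ∫ y in Set.Ici (0:ℝ), f₀ y

/-- A probability density supported on `[0, ∞)`. -/
def IsDensity (f : ℝ → ℝ) : Prop :=
  Measurable f ∧ (∀ x < (0:ℝ), f x = 0) ∧ (∀ x : ℝ, 0 ≤ f x) ∧
    ∫ y in Set.Ioi (0:ℝ), f y = 1


section Aux

open Real

lemma aSeq_pos (n : ℕ) : 0 < aSeq n := by
  unfold aSeq; positivity

lemma aSeq_mono {n m : ℕ} (h : n ≤ m) : aSeq n ≤ aSeq m := by
  unfold aSeq
  exact pow_le_pow_right₀ one_le_two (Nat.pow_le_pow_left h 2)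

lemma mIdx_le {n : ℕ} (hn : 1 ≤ n) : mIdx n ≤ n := by
  unfold mIdx
  refine max_le hn (Nat.ceil_le.2 ?_)
  have h56 : Real.sqrt 5 / Real.sqrt 6 ≤ 1 :=
    div_le_one_of_le₀ (Real.sqrt_le_sqrt (by norm_num)) (Real.sqrt_nonneg 6)
  calc Real.sqrt 5 / Real.sqrt 6 * (n : ℝ) ≤ 1 * (n : ℝ) :=
        mul_le_mul_of_nonneg_right h56 (Nat.cast_nonneg n)
    _ = (n : ℝ) := one_mul _

lemma log_np1_pos {n : ℕ} (hn : 1 ≤ n) : 0 < Real.log ((n : ℝ) + 1) := by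
  apply Real.log_pos
  have : (1 : ℝ) ≤ (n : ℝ) := by exact_mod_cast hn
  linarith

lemma log_two_le_log_np1 {n : ℕ} (hn : 1 ≤ n) :
    Real.log 2 ≤ Real.log ((n : ℝ) + 1) := by
  apply Real.log_le_log (by norm_num)
  have : (1 : ℝ) ≤ (n : ℝ) := by exact_mod_cast hn
  linarith

lemma aSeq_lt_bSeq {n : ℕ} (hn : 1 ≤ n) : aSeq n < bSeq n := by
  unfold bSeq
  have h1 : 0 < aSeq (mIdx n) := aSeq_pos _
  have h2 : 0 < Real.log ((n : ℝ) + 1) := log_np1_pos hn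
  have h3 := mul_pos h1 (pow_pos h2 2)
  linarith

lemma bSeq_lt_aSeq_succ {n : ℕ} (hn : 1 ≤ n) : bSeq n < aSeq (n + 1) := by
  have hm : aSeq (mIdx n) ≤ aSeq n := aSeq_mono (mIdx_le hn)
  have hlog : Real.log ((n : ℝ) + 1) ≤ (n : ℝ) := by
    have := Real.log_le_sub_one_of_pos (x := (n : ℝ) + 1) (by positivity)
    linarith
  have hlognn : 0 ≤ Real.log ((n : ℝ) + 1) := (log_np1_pos hn).le
  have hlog2 : (Real.log ((n : ℝ) + 1)) ^ 2 ≤ (n : ℝ) ^ 2 :=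
    pow_le_pow_left₀ hlognn hlog 2
  have hn2 : (n : ℝ) < 2 ^ n := by exact_mod_cast (Nat.lt_two_pow_self (n := n))
  have hn0 : (0 : ℝ) ≤ (n : ℝ) := Nat.cast_nonneg n
  have hkey : (1 : ℝ) + (n : ℝ) ^ 2 < 2 ^ (2 * n + 1) := by
    have e : (2 : ℝ) ^ (2 * n + 1) = 2 * ((2 : ℝ) ^ n) ^ 2 := by
      rw [pow_succ, ← pow_mul, mul_comm n 2]; ring
    have h1 : (1 : ℝ) ≤ ((2 : ℝ) ^ n) ^ 2 := one_le_pow₀ (one_le_pow₀ one_le_two)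
    have h2 : (n : ℝ) ^ 2 < ((2 : ℝ) ^ n) ^ 2 := by nlinarith
    rw [e]; nlinarith
  have ha : aSeq (n + 1) = aSeq n * 2 ^ (2 * n + 1) := by
    unfold aSeq
    rw [← pow_add]
    congr 1
    ring
  have hapos : 0 < aSeq n := aSeq_pos n
  have hb : bSeq n ≤ aSeq n + aSeq n * (n : ℝ) ^ 2 := by
    unfold bSeq
    have : aSeq (mIdx n) * (Real.log ((n : ℝ) + 1)) ^ 2 ≤ aSeq n * (n : ℝ) ^ 2 := by
      apply mul_le_mul hm hlog2 (by positivity) hapos.le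
    linarith
  calc bSeq n ≤ aSeq n * (1 + (n : ℝ) ^ 2) := by rw [mul_add, mul_one]; linarith
    _ < aSeq n * 2 ^ (2 * n + 1) := by
        exact mul_lt_mul_of_pos_left hkey hapos
    _ = aSeq (n + 1) := ha.symm

lemma bSeq_lt_cSeq {n : ℕ} (hn : 1 ≤ n) : bSeq n < cSeq n := by
  have := bSeq_lt_aSeq_succ hn
  unfold cSeq; linarith

lemma cSeq_lt_aSeq_succ {n : ℕ} (hn : 1 ≤ n) : cSeq n < aSeq (n + 1) := by
  have := bSeq_lt_aSeq_succ hn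
  unfold cSeq; linarith

lemma affine_le_max {f : ℝ → ℝ} {p q x : ℝ} (h : AffineOnIcc f p q) (hpq : p < q)
    (hx : x ∈ Set.Icc p q) : f x ≤ max (f p) (f q) := by
  rw [h x hx]
  have ht0 : 0 ≤ (x - p) / (q - p) := div_nonneg (by linarith [hx.1]) (by linarith)
  have ht1 : (x - p) / (q - p) ≤ 1 := (div_le_one (by linarith)).2 (by linarith [hx.2])
  rcases le_total (f p) (f q) with hle | hle
  · have : f p + (x - p) / (q - p) * (f q - f p) ≤ f q := by nlinarith
    exact this.trans (le_max_right _ _)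
  · have : f p + (x - p) / (q - p) * (f q - f p) ≤ f p := by nlinarith
    exact this.trans (le_max_left _ _)

lemma block_bound {f₀ : ℝ → ℝ} (hf₀ : PWConstruction f₀) {n : ℕ} (hn : 1 ≤ n) {x : ℝ}
    (hx : x ∈ Set.Icc (aSeq n) (aSeq (n + 1))) : f₀ x ≤ 3 / aSeq n ^ 3 := by
  obtain ⟨hc, hpos, h0, hval, haff0, haff⟩ := hf₀
  obtain ⟨v1, v2, v3⟩ := hval n hn
  obtain ⟨g1, g2, g3⟩ := haff n hn
  have v4 := (hval (n + 1) (Nat.le_succ_of_le hn)).1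
  have hA : (0 : ℝ) < aSeq n ^ 3 := pow_pos (aSeq_pos n) 3
  have hA' : (0 : ℝ) < aSeq (n + 1) ^ 3 := pow_pos (aSeq_pos (n + 1)) 3
  have hlogn := log_two_le_log_np1 hn
  have e1 : f₀ (aSeq n) ≤ 3 / aSeq n ^ 3 := by
    rw [v1, div_le_div_iff₀ hA hA]; nlinarith
  have e2 : f₀ (bSeq n) ≤ 3 / aSeq n ^ 3 := by
    rw [v2, div_div, div_le_div_iff₀ (mul_pos hA (log_np1_pos hn)) hA]
    have hl2 := Real.log_two_gt_d9
    have hmul : aSeq n ^ 3 * Real.log 2 ≤ aSeq n ^ 3 * Real.log ((n : ℝ) + 1) :=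
      mul_le_mul_of_nonneg_left hlogn hA.le
    nlinarith
  have e3 : f₀ (cSeq n) ≤ 3 / aSeq n ^ 3 := by
    rw [v3, div_le_div_iff₀ hA hA]; nlinarith
  have e4 : f₀ (aSeq (n + 1)) ≤ 3 / aSeq n ^ 3 := by
    rw [v4, div_le_div_iff₀ hA' hA]
    have hmono := aSeq_mono (Nat.le_succ n)
    nlinarith [pow_le_pow_left₀ (aSeq_pos n).le hmono 3]
  rcases le_total x (bSeq n) with h1 | h1
  · have := affine_le_max g1 (aSeq_lt_bSeq hn) ⟨hx.1, h1⟩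
    exact this.trans (max_le e1 e2)
  rcases le_total x (cSeq n) with h2 | h2
  · have := affine_le_max g2 (bSeq_lt_cSeq hn) ⟨h1, h2⟩
    exact this.trans (max_le e2 e3)
  · have := affine_le_max g3 (cSeq_lt_aSeq_succ hn) ⟨h2, hx.2⟩
    exact this.trans (max_le e3 e4)

lemma exists_block {x : ℝ} (hx : 2 ≤ x) :
    ∃ n : ℕ, 1 ≤ n ∧ aSeq n ≤ x ∧ x ≤ aSeq (n + 1) := by
  classical
  set P : ℕ → Prop := fun n => aSeq n ≤ x with hPdef
  set N := ⌈x⌉₊ with hNdef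
  have hN1 : 1 ≤ N := Nat.one_le_ceil_iff.2 (by linarith)
  have hP1 : P 1 := by
    show aSeq 1 ≤ x
    unfold aSeq; norm_num; linarith
  set n := Nat.findGreatest P N with hndef
  have hn1 : 1 ≤ n := Nat.le_findGreatest hN1 hP1
  have hPn : P n := Nat.findGreatest_spec hN1 hP1
  refine ⟨n, hn1, hPn, ?_⟩
  by_cases h : n + 1 ≤ N
  · have hnot : ¬P (n + 1) := Nat.findGreatest_is_greatest (Nat.lt_succ_self n) h
    exact le_of_not_ge hnot
  · push_neg at h
    have hxN : x ≤ (N : ℝ) := Nat.le_ceil x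
    have h2N : (N : ℝ) < 2 ^ N := by exact_mod_cast (Nat.lt_two_pow_self (n := N))
    have hNa : (2 : ℝ) ^ N ≤ aSeq (n + 1) := by
      have hn' : N ≤ n + 1 := h.le
      have : N ≤ (n + 1) ^ 2 := le_trans hn' (Nat.le_self_pow two_ne_zero _)
      unfold aSeq
      exact pow_le_pow_right₀ one_le_two this
    linarith

lemma global_bound {f₀ : ℝ → ℝ} (hf₀ : PWConstruction f₀) {x : ℝ} (hx : 2 ≤ x) :
    f₀ x ≤ 256 / x ^ 2 := by
  obtain ⟨n, hn1, hax, hxa⟩ := exists_block hx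
  have h1 : f₀ x ≤ 3 / aSeq n ^ 3 := block_bound hf₀ hn1 ⟨hax, hxa⟩
  have hxpos : (0 : ℝ) < x := by linarith
  have hA : (0 : ℝ) < aSeq n ^ 3 := pow_pos (aSeq_pos n) 3
  have key : 3 * aSeq (n + 1) ^ 2 ≤ 256 * aSeq n ^ 3 := by
    have e1 : aSeq (n + 1) ^ 2 = (2 : ℝ) ^ (2 * (n + 1) ^ 2) := by
      unfold aSeq; rw [← pow_mul]; congr 1; ring
    have e2 : aSeq n ^ 3 = (2 : ℝ) ^ (3 * n ^ 2) := by
      unfold aSeq; rw [← pow_mul]; congr 1; ring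
    rw [e1, e2]
    have hexp : 2 * (n + 1) ^ 2 + 2 ≤ 3 * n ^ 2 + 8 := by
      zify; nlinarith [sq_nonneg ((n : ℤ) - 2)]
    have hle : (2 : ℝ) ^ (2 * (n + 1) ^ 2 + 2) ≤ (2 : ℝ) ^ (3 * n ^ 2 + 8) :=
      pow_le_pow_right₀ one_le_two hexp
    have hp1 : (0 : ℝ) < (2 : ℝ) ^ (2 * (n + 1) ^ 2) := by positivity
    calc 3 * (2 : ℝ) ^ (2 * (n + 1) ^ 2) ≤ 4 * (2 : ℝ) ^ (2 * (n + 1) ^ 2) := by linarith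
      _ = (2 : ℝ) ^ (2 * (n + 1) ^ 2 + 2) := by rw [pow_add]; ring
      _ ≤ (2 : ℝ) ^ (3 * n ^ 2 + 8) := hle
      _ = 256 * (2 : ℝ) ^ (3 * n ^ 2) := by rw [pow_add]; ring
  have hx2 : x ^ 2 ≤ aSeq (n + 1) ^ 2 := pow_le_pow_left₀ hxpos.le hxa 2
  have h2 : 3 / aSeq n ^ 3 ≤ 256 / x ^ 2 := by
    rw [div_le_div_iff₀ hA (pow_pos hxpos 2)]
    nlinarith
  linarith

end Aux

theorem pw_construction_integrable_and_density (f₀ : ℝ → ℝ)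
    (hf₀ : PWConstruction f₀) :
    IntegrableOn f₀ (Set.Ici 0) ∧
    0 < ∫ y in Set.Ici (0:ℝ), f₀ y ∧
    IsDensity (normExt f₀) := by
  classical
  have hcont := hf₀.1
  have hpos := hf₀.2.1
  have hI2sub : Set.Ici (2 : ℝ) ⊆ Set.Ici (0 : ℝ) := Set.Ici_subset_Ici.2 (by norm_num)
  -- integrability of 256 / x^2 on Ici 2
  have hg : IntegrableOn (fun x : ℝ => 256 / x ^ 2) (Set.Ici 2) := by
    rw [integrableOn_Ici_iff_integrableOn_Ioi]
    have h1 : IntegrableOn (fun x : ℝ => x ^ (-2 : ℝ)) (Set.Ioi 2) :=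
      integrableOn_Ioi_rpow_of_lt (by norm_num) (by norm_num)
    have h2 : IntegrableOn (fun x : ℝ => 256 * x ^ (-2 : ℝ)) (Set.Ioi 2) :=
      h1.const_mul (256 : ℝ)
    refine h2.congr_fun (fun x hx => ?_) measurableSet_Ioi
    have hx0 : (0 : ℝ) < x := lt_trans (by norm_num) hx
    beta_reduce
    rw [show ((-2 : ℝ)) = -((2 : ℕ) : ℝ) by norm_num, Real.rpow_neg hx0.le,
      Real.rpow_natCast]
    rw [div_eq_mul_inv]
  have hint : IntegrableOn f₀ (Set.Ici 0) := by
    have hsub : Set.Ici (0 : ℝ) ⊆ Set.Icc 0 2 ∪ Set.Ici 2 := by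
      intro x hx
      rcases le_total x 2 with h | h
      · exact Or.inl ⟨hx, h⟩
      · exact Or.inr h
    refine (MeasureTheory.IntegrableOn.union ?_ ?_).mono_set hsub
    · exact (hcont.mono (Set.Icc_subset_Ici_self)).integrableOn_compact isCompact_Icc
    · refine MeasureTheory.Integrable.mono' hg
        ((hcont.mono hI2sub).aestronglyMeasurable measurableSet_Ici) ?_
      rw [MeasureTheory.ae_restrict_iff' measurableSet_Ici]
      refine MeasureTheory.ae_of_all _ fun x hx => ?_
      have hx2 : (2 : ℝ) ≤ x := hx
      rw [Real.norm_of_nonneg (hpos x (by linarith)).le]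
      exact global_bound hf₀ hx2
  have hIpos : 0 < ∫ y in Set.Ici (0 : ℝ), f₀ y := by
    rw [MeasureTheory.setIntegral_pos_iff_support_of_nonneg_ae ?_ hint]
    · have hsub : Set.Icc (0 : ℝ) 1 ⊆ Function.support f₀ ∩ Set.Ici 0 := by
        intro x hx
        exact ⟨(hpos x hx.1).ne', hx.1⟩
      refine lt_of_lt_of_le ?_ (measure_mono hsub)
      rw [Real.volume_Icc]
      norm_num
    · exact MeasureTheory.ae_restrict_of_forall_mem measurableSet_Ici
        fun x hx => (hpos x hx).le
  have hI0 : (∫ y in Set.Ici (0 : ℝ), f₀ y) ≠ 0 := hIpos.ne'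
  refine ⟨hint, hIpos, ?_, ?_, ?_, ?_⟩
  · -- measurability
    have hmax : Continuous fun x : ℝ => f₀ (max x 0) := by
      refine hcont.comp_continuous (continuous_id.max continuous_const) fun x => ?_
      exact le_max_right x 0
    have heq : normExt f₀ = Set.piecewise (Set.Iio 0) (fun _ => 0)
        (fun x => f₀ (max x 0) / ∫ y in Set.Ici (0 : ℝ), f₀ y) := by
      funext x
      by_cases h : x < 0
      · simp [normExt, h, Set.piecewise, Set.mem_Iio]
      · push_neg at h
        simp [normExt, not_lt.2 h, Set.piecewise, Set.mem_Iio, not_lt.2 h,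
          max_eq_left h]
    rw [heq]
    exact Measurable.piecewise measurableSet_Iio measurable_const
      ((hmax.div_const _).measurable)
  · intro x hx
    simp [normExt, hx]
  · intro x
    by_cases h : x < 0
    · simp [normExt, h]
    · push_neg at h
      simp only [normExt, not_lt.2 h, if_false]
      exact div_nonneg (hpos x h).le hIpos.le
  · have h1 : ∫ y in Set.Ioi (0 : ℝ), normExt f₀ y
        = ∫ y in Set.Ioi (0 : ℝ), f₀ y / ∫ y in Set.Ici (0 : ℝ), f₀ y := by
      refine MeasureTheory.setIntegral_congr_fun measurableSet_Ioi fun x hx => ?_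
      simp [normExt, not_lt.2 (le_of_lt (show (0 : ℝ) < x from hx))]
    have h2 : ∫ y in Set.Ioi (0 : ℝ), f₀ y = ∫ y in Set.Ici (0 : ℝ), f₀ y :=
      (MeasureTheory.integral_Ici_eq_integral_Ioi).symm
    rw [h1, MeasureTheory.integral_div, h2, div_self hI0]
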